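/- For all n ≥ 1, the number of self-half-conjugate overpartitions in D_2(n) equals the number of partitions of n into distinct parts, i.e., h(n) = q(n). -/

import Mathlib

/-- The multiset of parts of the conjugate partition. -/
def conjParts (s : Multiset ℕ) : Multiset ℕ :=
  ((Finset.Icc 1 s.sum).val.map fun i => Multiset.card (s.filter fun j => i ≤ j)).filter
    fun x => 0 < x

/-- `h(n)`: the number of self-half-conjugate overpartitions of `n` wherein only
even parts may be overlined, i.e., pairs `(μ, ν)` with `μ` a self-conjugate
partition, `ν` a partition into distinct even parts, and `|μ| + |ν| = n`. -/
def selfHalfConj (n : ℕ) : ℕ :=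
  ∑ m ∈ Finset.range (n + 1),
    Fintype.card {μ : Nat.Partition m // μ.parts = conjParts μ.parts} *
      Fintype.card {ν : Nat.Partition (n - m) // ν.parts.Nodup ∧ ∀ x ∈ ν.parts, Even x}


open Multiset YoungDiagram Finset

lemma YD_card_cells (Y : YoungDiagram) :
    Y.cells.card = ∑ i ∈ Finset.range (Y.colLen 0), Y.rowLen i := by
  rw [Finset.card_eq_sum_card_fiberwise (f := Prod.fst) (t := Finset.range (Y.colLen 0))]
  · refine Finset.sum_congr rfl fun i _ => ?_
    rw [Y.rowLen_eq_card]
    congr 1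
  · intro c hc
    rw [Finset.mem_coe, Finset.mem_range, ← YoungDiagram.mem_iff_lt_colLen]
    exact Y.up_left_mem le_rfl (Nat.zero_le _) (by simpa using hc)

lemma YD_rowLens_sum (Y : YoungDiagram) :
    ((Y.rowLens : Multiset ℕ)).sum = Y.cells.card := by
  rw [YD_card_cells, YoungDiagram.rowLens, Multiset.sum_coe, Finset.sum_eq_multiset_sum]
  rfl

lemma YD_coe_rowLens (Y : YoungDiagram) :
    (Y.rowLens : Multiset ℕ) = (Finset.range (Y.colLen 0)).val.map Y.rowLen := by
  rw [YoungDiagram.rowLens, ← Multiset.map_coe]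
  rfl

lemma YD_filter_card (Y : YoungDiagram) (i : ℕ) :
    Multiset.card ((Y.rowLens : Multiset ℕ).filter fun x => i + 1 ≤ x) = Y.colLen i := by
  rw [YD_coe_rowLens, Multiset.filter_map]
  rw [Multiset.card_map]
  have h1 : ∀ k ∈ (Finset.range (Y.colLen 0)).val,
      ((fun x => i + 1 ≤ x) ∘ Y.rowLen) k ↔ k < Y.colLen i := by
    intro k _
    simp only [Function.comp_apply]
    rw [← Nat.lt_iff_add_one_le, ← YoungDiagram.mem_iff_lt_rowLen, YoungDiagram.mem_iff_lt_colLen]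
  rw [Multiset.filter_congr h1]
  have h2 : Finset.filter (fun k => k < Y.colLen i) (Finset.range (Y.colLen 0)) =
      Finset.range (Y.colLen i) := by
    have hc : Y.colLen i ≤ Y.colLen 0 := Y.colLen_anti 0 i (Nat.zero_le i)
    ext k
    simp only [Finset.mem_filter, Finset.mem_range]
    omega
  have := congrArg Finset.card h2
  rw [Finset.card_filter] at this
  rw [← Finset.card_filter, Finset.card_range] at this; exact this

lemma YD_conjParts (Y : YoungDiagram) :
    conjParts (Y.rowLens : Multiset ℕ) = (Y.transpose.rowLens : Multiset ℕ) := by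
  set n := Y.cells.card with hn
  set r := Y.rowLen 0 with hr
  have hsum : ((Y.rowLens : Multiset ℕ)).sum = n := YD_rowLens_sum Y
  have hrn : r ≤ n := by
    rw [hn, hr, Y.rowLen_eq_card]
    exact Finset.card_le_card (Finset.filter_subset _ _)
  rw [conjParts, hsum]
  have hmap : (Finset.Icc 1 n).val.map (fun i => Multiset.card
        ((Y.rowLens : Multiset ℕ).filter fun j => i ≤ j)) =
      (Finset.Icc 1 n).val.map (fun i => Y.colLen (i - 1)) := by
    apply Multiset.map_congr rfl
    intro i hi
    have h1 : 1 ≤ i := by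
      rw [Finset.mem_val, Finset.mem_Icc] at hi; exact hi.1
    have h2 := YD_filter_card Y (i - 1)
    rw [show i - 1 + 1 = i from by omega] at h2
    exact h2
  rw [hmap]
  have hIcc : (Finset.Icc 1 n).val = (Finset.range n).val.map (· + 1) := by
    have : Finset.Icc 1 n = Finset.map ⟨(· + 1), fun a b h => by simpa using h⟩ (Finset.range n) := by
      ext k
      simp only [Finset.mem_Icc, Finset.mem_map, Finset.mem_range, Function.Embedding.coeFn_mk]
      constructor
      · intro hk; exact ⟨k - 1, by omega, show k - 1 + 1 = k by omega⟩
      · rintro ⟨a, ha, rfl⟩; show 1 ≤ a + 1 ∧ a + 1 ≤ n; omega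
    rw [this, Finset.map_val]
    rfl
  rw [hIcc, Multiset.map_map]
  have hcomp : ((fun i => Y.colLen (i - 1)) ∘ (· + 1)) = fun j => Y.colLen j := by
    funext j; simp
  rw [hcomp]
  -- split range n into range r and Ico r n
  have hsplit : (Finset.range n).val = (Finset.range r).val + (Finset.Ico r n).val := by
    have hd : Disjoint (Finset.range r) (Finset.Ico r n) := by
      rw [Finset.disjoint_left]
      intro a ha hb
      rw [Finset.mem_range] at ha
      rw [Finset.mem_Ico] at hb
      omega
    have : Finset.range n = (Finset.range r).disjUnion (Finset.Ico r n) hd := by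
      rw [Finset.disjUnion_eq_union, Finset.range_eq_Ico]
      rw [Finset.range_eq_Ico]; exact (Finset.Ico_union_Ico_eq_Ico (Nat.zero_le r) hrn).symm
    rw [this]
    rfl
  rw [hsplit, Multiset.map_add, Multiset.filter_add]
  have hpos : ∀ j, (0 < Y.colLen j ↔ j < r) := by
    intro j
    rw [← YoungDiagram.mem_iff_lt_colLen (i := 0) (j := j), YoungDiagram.mem_iff_lt_rowLen]
  have h1 : Multiset.filter (fun x => 0 < x) ((Finset.range r).val.map (fun j => Y.colLen j)) =
      (Finset.range r).val.map (fun j => Y.colLen j) := by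
    rw [Multiset.filter_eq_self]
    intro a ha
    rw [Multiset.mem_map] at ha
    obtain ⟨j, hj, rfl⟩ := ha
    rw [Finset.mem_val, Finset.mem_range] at hj
    exact (hpos j).2 hj
  have h2 : Multiset.filter (fun x => 0 < x) ((Finset.Ico r n).val.map (fun j => Y.colLen j)) =
      0 := by
    rw [Multiset.filter_eq_nil]
    intro a ha
    rw [Multiset.mem_map] at ha
    obtain ⟨j, hj, rfl⟩ := ha
    rw [Finset.mem_val, Finset.mem_Ico] at hj
    intro hcon
    exact absurd ((hpos j).1 hcon) (by omega)
  rw [h1, h2, add_zero]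
  rw [YD_coe_rowLens]
  have : Y.transpose.colLen 0 = r := Y.colLen_transpose 0
  rw [this]
  apply Multiset.map_congr rfl
  intro j _
  exact (Y.rowLen_transpose j).symm

lemma YD_rowLens_inj {Y₁ Y₂ : YoungDiagram} (h : Y₁.rowLens = Y₂.rowLens) : Y₁ = Y₂ :=
  YoungDiagram.equivListRowLens.injective (Subtype.ext h)

lemma sort_coe_sorted (l : List ℕ) (hl : l.Pairwise (· ≥ ·)) :
    Multiset.sort (↑l : Multiset ℕ) (· ≥ ·) = l := by
  apply List.Perm.eq_of_pairwise' (Multiset.pairwise_sort _ _) hl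
  rw [← Multiset.coe_eq_coe, Multiset.sort_eq]

def equivSC (m : ℕ) : {μ : Nat.Partition m // μ.parts = conjParts μ.parts} ≃
    {Y : YoungDiagram // Y.cells.card = m ∧ Y.transpose = Y} where
  toFun := fun ⟨μ, hμ⟩ => by
    refine ⟨YoungDiagram.ofRowLens (Multiset.sort μ.parts (· ≥ ·))
      (Multiset.pairwise_sort _ _).sortedGE, ?_, ?_⟩
    · have hpos : ∀ x ∈ Multiset.sort μ.parts (· ≥ ·), 0 < x := fun x hx =>
        μ.parts_pos (by rwa [← Multiset.mem_sort (· ≥ ·)])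
      rw [← YD_rowLens_sum, YoungDiagram.rowLens_ofRowLens_eq_self hpos,
        Multiset.sort_eq, μ.parts_sum]
    · have hpos : ∀ x ∈ Multiset.sort μ.parts (· ≥ ·), 0 < x := fun x hx =>
        μ.parts_pos (by rwa [← Multiset.mem_sort (· ≥ ·)])
      apply YD_rowLens_inj
      apply List.Perm.eq_of_pairwise' (YoungDiagram.rowLens_sorted _).pairwise
        (YoungDiagram.rowLens_sorted _).pairwise
      rw [← Multiset.coe_eq_coe, ← YD_conjParts,
        YoungDiagram.rowLens_ofRowLens_eq_self hpos, Multiset.sort_eq, ← hμ]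
  invFun := fun ⟨Y, hc, ht⟩ =>
    ⟨⟨(Y.rowLens : Multiset ℕ), fun hi => Y.pos_of_mem_rowLens _ (by exact_mod_cast hi),
      by rw [YD_rowLens_sum, hc]⟩, by
        show (Y.rowLens : Multiset ℕ) = conjParts (Y.rowLens : Multiset ℕ)
        rw [YD_conjParts, ht]⟩
  left_inv := fun ⟨μ, hμ⟩ => by
    apply Subtype.ext
    apply Nat.Partition.ext
    show (YoungDiagram.rowLens _ : Multiset ℕ) = μ.parts
    have hpos : ∀ x ∈ Multiset.sort μ.parts (· ≥ ·), 0 < x := fun x hx =>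
      μ.parts_pos (by rwa [← Multiset.mem_sort (· ≥ ·)])
    rw [YoungDiagram.rowLens_ofRowLens_eq_self hpos, Multiset.sort_eq]
  right_inv := fun ⟨Y, hc, ht⟩ => by
    apply Subtype.ext
    apply YD_rowLens_inj
    show YoungDiagram.rowLens _ = Y.rowLens
    have hpos : ∀ x ∈ Multiset.sort (Y.rowLens : Multiset ℕ) (· ≥ ·), 0 < x := fun x hx =>
      Y.pos_of_mem_rowLens _ (by
        have := (Multiset.mem_sort (α := ℕ) (· ≥ ·)).1 hx
        exact_mod_cast this)
    rw [YoungDiagram.rowLens_ofRowLens_eq_self hpos,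
      sort_coe_sorted _ (YoungDiagram.rowLens_sorted Y).pairwise]



noncomputable def dY (Y : YoungDiagram) : ℕ := sInf {k | Y.rowLen k ≤ k}

lemma dY_nonempty (Y : YoungDiagram) : {k | Y.rowLen k ≤ k}.Nonempty := by
  refine ⟨Y.colLen 0, ?_⟩
  have : ¬ (Y.colLen 0, 0) ∈ Y := by
    rw [YoungDiagram.mem_iff_lt_colLen]; omega
  rw [YoungDiagram.mem_iff_lt_rowLen] at this
  simp only [Set.mem_setOf_eq]; omega

lemma lt_dY_iff (Y : YoungDiagram) (k : ℕ) : k < dY Y ↔ k < Y.rowLen k := by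
  constructor
  · intro h
    have := Nat.notMem_of_lt_sInf h
    simp only [Set.mem_setOf_eq] at this; omega
  · intro h
    by_contra hc
    push_neg at hc
    have hd : Y.rowLen (dY Y) ≤ dY Y := Nat.sInf_mem (dY_nonempty Y)
    have : Y.rowLen k ≤ Y.rowLen (dY Y) := Y.rowLen_anti _ _ hc
    omega

noncomputable def hookList (Y : YoungDiagram) : List ℕ :=
  (List.range (dY Y)).map (fun k => 2 * Y.rowLen k - (2 * k + 1))

lemma hookList_length (Y : YoungDiagram) : (hookList Y).length = dY Y := by
  simp [hookList]

lemma hookList_get (Y : YoungDiagram) (k : ℕ) (h : k < (hookList Y).length) :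
    (hookList Y)[k] = 2 * Y.rowLen k - (2 * k + 1) := by
  simp [hookList]

lemma hookList_pos (Y : YoungDiagram) : ∀ x ∈ hookList Y, 0 < x := by
  intro x hx
  rw [hookList, List.mem_map] at hx
  obtain ⟨k, hk, rfl⟩ := hx
  rw [List.mem_range, lt_dY_iff] at hk
  omega

lemma hookList_odd (Y : YoungDiagram) : ∀ x ∈ hookList Y, Odd x := by
  intro x hx
  rw [hookList, List.mem_map] at hx
  obtain ⟨k, hk, rfl⟩ := hx
  rw [List.mem_range, lt_dY_iff] at hk
  exact ⟨Y.rowLen k - k - 1, by omega⟩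

lemma hookList_sorted_gt (Y : YoungDiagram) : (hookList Y).Pairwise (· > ·) := by
  rw [hookList, List.pairwise_iff_getElem]
  intro i j hi hj hij
  simp only [List.length_map, List.length_range] at hi hj
  simp only [List.getElem_map, List.getElem_range]
  have h1 : j < Y.rowLen j := (lt_dY_iff Y j).1 hj
  have h2 : Y.rowLen j ≤ Y.rowLen i := Y.rowLen_anti i j (le_of_lt hij)
  simp only [gt_iff_lt]
  omega

lemma hookList_sorted (Y : YoungDiagram) : (hookList Y).Pairwise (· ≥ ·) :=
  (hookList_sorted_gt Y).imp le_of_lt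

lemma hookList_nodup (Y : YoungDiagram) : (hookList Y).Nodup :=
  (hookList_sorted_gt Y).nodup

lemma colLen_eq_rowLen {Y : YoungDiagram} (ht : Y.transpose = Y) (t : ℕ) :
    Y.colLen t = Y.rowLen t := by
  rw [← Y.rowLen_transpose, ht]

lemma hook_sum {Y : YoungDiagram} (ht : Y.transpose = Y) :
    ∑ k ∈ Finset.range (dY Y), (2 * Y.rowLen k - (2 * k + 1)) = Y.cells.card := by
  rw [Finset.card_eq_sum_card_fiberwise (f := fun c => min c.1 c.2)
    (t := Finset.range (dY Y))]
  · refine Finset.sum_congr rfl fun k hk => ?_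
    rw [Finset.mem_range, lt_dY_iff] at hk
    have hfib : Finset.filter (fun c => min c.1 c.2 = k) Y.cells =
        ({k} ×ˢ Finset.Ico k (Y.rowLen k)) ∪ (Finset.Ico (k+1) (Y.rowLen k) ×ˢ {k}) := by
      ext ⟨i, j⟩
      simp only [Finset.mem_filter, YoungDiagram.mem_cells, Finset.mem_union,
        Finset.mem_product, Finset.mem_singleton, Finset.mem_Ico]
      constructor
      · rintro ⟨hmem, hmin⟩
        rcases le_or_gt i j with h | h
        · left
          have : i = k := by omega
          subst this
          rw [YoungDiagram.mem_iff_lt_rowLen] at hmem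
          exact ⟨rfl, by omega, hmem⟩
        · right
          have : j = k := by omega
          subst this
          rw [YoungDiagram.mem_iff_lt_colLen, colLen_eq_rowLen ht] at hmem
          exact ⟨⟨by omega, hmem⟩, rfl⟩
      · rintro (⟨rfl, h1, h2⟩ | ⟨⟨h1, h2⟩, rfl⟩)
        · rw [YoungDiagram.mem_iff_lt_rowLen]
          exact ⟨h2, by omega⟩
        · rw [YoungDiagram.mem_iff_lt_colLen, colLen_eq_rowLen ht]
          exact ⟨h2, by omega⟩
    rw [hfib, Finset.card_union_of_disjoint, Finset.card_product, Finset.card_product]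
    · simp only [Finset.card_singleton, Nat.card_Ico]
      omega
    · rw [Finset.disjoint_left]
      rintro ⟨i, j⟩ h1 h2
      simp only [Finset.mem_product, Finset.mem_singleton, Finset.mem_Ico] at h1 h2
      omega
  · rintro ⟨i, j⟩ hc
    rw [Finset.mem_coe, YoungDiagram.mem_cells] at hc
    have hkk : (min i j, min i j) ∈ Y :=
      Y.up_left_mem (Nat.min_le_left _ _) (Nat.min_le_right _ _) hc
    rw [YoungDiagram.mem_iff_lt_rowLen] at hkk
    rw [Finset.mem_coe, Finset.mem_range, lt_dY_iff]
    exact hkk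

lemma hookList_sum {Y : YoungDiagram} (ht : Y.transpose = Y) :
    (hookList Y).sum = Y.cells.card := by
  rw [← hook_sum ht, hookList, Finset.sum_eq_multiset_sum]
  rfl

/-- half-value of the k-th entry -/
def aval (l : List ℕ) (k : ℕ) : ℕ := l.getD k 0 / 2

lemma aval_strict {l : List ℕ} (hsort : l.Pairwise (· > ·)) (hodd : ∀ x ∈ l, Odd x)
    {i j : ℕ} (hij : i < j) (hj : j < l.length) : aval l j < aval l i := by
  have h1 : l[j] < l[i] := by
    have := List.pairwise_iff_getElem.1 hsort i j (hij.trans hj) hj hij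
    exact this
  obtain ⟨s, hs⟩ := hodd l[i] (List.getElem_mem _)
  obtain ⟨t, htt⟩ := hodd l[j] (List.getElem_mem _)
  rw [aval, aval, List.getD_eq_getElem l 0 hj, List.getD_eq_getElem l 0 (hij.trans hj), hs, htt]
  omega

lemma aval_add_mono {l : List ℕ} (hsort : l.Pairwise (· > ·)) (hodd : ∀ x ∈ l, Odd x)
    {i j : ℕ} (hij : i ≤ j) (hj : j < l.length) : aval l j + j ≤ aval l i + i := by
  obtain ⟨t, rfl⟩ := Nat.exists_eq_add_of_le hij
  clear hij
  induction t with
  | zero => simp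
  | succ t ih =>
    have h1 : aval l (i + (t+1)) < aval l (i + t) :=
      aval_strict hsort hodd (by omega) hj
    have h2 := ih (by omega)
    omega

noncomputable def GD (l : List ℕ) (hsort : l.Pairwise (· > ·)) (hodd : ∀ x ∈ l, Odd x) :
    YoungDiagram where
  cells := (Finset.range l.sum ×ˢ Finset.range l.sum).filter
    (fun c => min c.1 c.2 < l.length ∧ max c.1 c.2 ≤ aval l (min c.1 c.2) + min c.1 c.2)
  isLowerSet := by
    rintro ⟨i2, j2⟩ ⟨i1, j1⟩ ⟨hi : i1 ≤ i2, hj : j1 ≤ j2⟩ h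
    simp only [Finset.coe_filter, Set.mem_setOf_eq, Finset.mem_product,
      Finset.mem_range] at h ⊢
    obtain ⟨⟨hr1, hr2⟩, hk, hm⟩ := h
    refine ⟨⟨by omega, by omega⟩, by omega, ?_⟩
    have hmono : aval l (min i2 j2) + min i2 j2 ≤ aval l (min i1 j1) + min i1 j1 :=
      aval_add_mono hsort hodd (by omega) hk
    omega

lemma mem_GD {l : List ℕ} {hsort : l.Pairwise (· > ·)} {hodd : ∀ x ∈ l, Odd x} (c : ℕ × ℕ) :
    c ∈ GD l hsort hodd ↔
      min c.1 c.2 < l.length ∧ max c.1 c.2 ≤ aval l (min c.1 c.2) + min c.1 c.2 := by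
  obtain ⟨i, j⟩ := c
  show (i, j) ∈ Finset.filter _ _ ↔ _
  rw [Finset.mem_filter]
  simp only [Finset.mem_product, Finset.mem_range]
  constructor
  · tauto
  · rintro ⟨hk, hm⟩
    refine ⟨⟨?_, ?_⟩, hk, hm⟩ <;>
    · have h0 : aval l (min i j) + min i j ≤ aval l 0 + 0 :=
        aval_add_mono hsort hodd (Nat.zero_le _) hk
      have hlen : 0 < l.length := by omega
      obtain ⟨s, hs⟩ := hodd l[0] (List.getElem_mem _)
      have hle : l[0] ≤ l.sum := List.single_le_sum (fun x _ => Nat.zero_le x) _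
        (List.getElem_mem _)
      have : aval l 0 = s := by rw [aval, List.getD_eq_getElem l 0 hlen, hs]; omega
      omega

lemma rowLen_GD {l : List ℕ} {hsort : l.Pairwise (· > ·)} {hodd : ∀ x ∈ l, Odd x}
    {k : ℕ} (hk : k < l.length) :
    (GD l hsort hodd).rowLen k = aval l k + k + 1 := by
  have h1 : (k, aval l k + k) ∈ GD l hsort hodd := by
    rw [mem_GD]
    constructor
    · simpa [min_eq_left (by omega : k ≤ aval l k + k)] using hk
    · simp [min_eq_left (by omega : k ≤ aval l k + k),
        max_eq_right (by omega : k ≤ aval l k + k)]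
  have h2 : (k, aval l k + k + 1) ∉ GD l hsort hodd := by
    rw [mem_GD]
    simp only [min_eq_left (by omega : k ≤ aval l k + k + 1),
      max_eq_right (by omega : k ≤ aval l k + k + 1)]
    omega
  rw [YoungDiagram.mem_iff_lt_rowLen] at h1 h2
  omega

lemma dY_GD {l : List ℕ} {hsort : l.Pairwise (· > ·)} {hodd : ∀ x ∈ l, Odd x} :
    dY (GD l hsort hodd) = l.length := by
  have key : ∀ t, t < dY (GD l hsort hodd) ↔ t < l.length := by
    intro t
    rw [lt_dY_iff]
    constructor
    · intro h
      by_contra hc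
      push_neg at hc
      have : (t, t) ∉ GD l hsort hodd := by
        rw [mem_GD]
        simp only [min_self]
        omega
      rw [YoungDiagram.mem_iff_lt_rowLen] at this
      omega
    · intro h
      rw [rowLen_GD h]
      omega
  have h1 := key (dY (GD l hsort hodd))
  have h2 := key l.length
  omega

lemma GD_transpose {l : List ℕ} {hsort : l.Pairwise (· > ·)} {hodd : ∀ x ∈ l, Odd x} :
    (GD l hsort hodd).transpose = GD l hsort hodd := by
  ext ⟨i, j⟩
  rw [YoungDiagram.mem_cells, YoungDiagram.mem_transpose, YoungDiagram.mem_cells]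
  show (j, i) ∈ GD l hsort hodd ↔ (i, j) ∈ GD l hsort hodd
  rw [mem_GD, mem_GD]
  simp [min_comm, max_comm]

lemma hookList_GD {l : List ℕ} {hsort : l.Pairwise (· > ·)} {hodd : ∀ x ∈ l, Odd x} :
    hookList (GD l hsort hodd) = l := by
  apply List.ext_getElem
  · rw [hookList_length, dY_GD]
  · intro k h1 h2
    rw [hookList_get]
    rw [hookList_length, dY_GD] at h1
    rw [rowLen_GD h1]
    obtain ⟨s, hs⟩ := hodd l[k] (List.getElem_mem _)
    have : aval l k = s := by rw [aval, List.getD_eq_getElem l 0 h1, hs]; omega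
    omega

lemma card_GD {l : List ℕ} {hsort : l.Pairwise (· > ·)} {hodd : ∀ x ∈ l, Odd x} :
    (GD l hsort hodd).cells.card = l.sum := by
  rw [← hookList_sum GD_transpose, hookList_GD]

lemma sort_sorted_gt (s : Multiset ℕ) (h : s.Nodup) :
    (Multiset.sort s (· ≥ ·)).Pairwise (· > ·) := by
  have h1 : (Multiset.sort s (· ≥ ·)).Pairwise (· ≥ ·) := Multiset.pairwise_sort _ _
  have h2 : (Multiset.sort s (· ≥ ·)).Nodup := by
    rw [← Multiset.coe_nodup, Multiset.sort_eq]; exact h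
  rw [List.Nodup] at h2
  exact (h1.and h2).imp (fun ⟨ha, hb⟩ => lt_of_le_of_ne ha (Ne.symm hb))

lemma sort_coe_sorted' (l : List ℕ) (hl : l.Pairwise (· ≥ ·)) :
    Multiset.sort (↑l : Multiset ℕ) (· ≥ ·) = l := by
  apply List.Perm.eq_of_pairwise' (Multiset.pairwise_sort _ _) hl
  rw [← Multiset.coe_eq_coe, Multiset.sort_eq]

noncomputable def equivHook (m : ℕ) :
    {Y : YoungDiagram // Y.cells.card = m ∧ Y.transpose = Y} ≃
      {ν : Nat.Partition m // ν.parts.Nodup ∧ ∀ x ∈ ν.parts, Odd x} where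
  toFun := fun ⟨Y, hc, ht⟩ =>
    ⟨⟨(hookList Y : Multiset ℕ),
      fun hi => hookList_pos Y _ (by exact_mod_cast hi),
      by rw [Multiset.sum_coe, hookList_sum ht, hc]⟩,
      by rw [Multiset.coe_nodup]; exact hookList_nodup Y,
      fun x hx => hookList_odd Y x (by exact_mod_cast hx)⟩
  invFun := fun ⟨ν, hnd, hodd⟩ =>
    ⟨GD (Multiset.sort ν.parts (· ≥ ·)) (sort_sorted_gt _ hnd)
        (fun x hx => hodd x (by rwa [← Multiset.mem_sort (· ≥ ·)])),
      by rw [card_GD, ← Multiset.sum_coe, Multiset.sort_eq, ν.parts_sum], GD_transpose⟩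
  left_inv := fun ⟨Y, hc, ht⟩ => by
    apply Subtype.ext
    dsimp only
    have hw : Multiset.sort ((hookList Y : Multiset ℕ)) (· ≥ ·) = hookList Y :=
      sort_coe_sorted' _ (hookList_sorted Y)
    ext ⟨i, j⟩
    rw [YoungDiagram.mem_cells, YoungDiagram.mem_cells, mem_GD, hw, hookList_length]
    have hav : ∀ k, k < dY Y → aval (hookList Y) k = Y.rowLen k - k - 1 := by
      intro k hk
      have hkr : k < Y.rowLen k := (lt_dY_iff Y k).1 hk
      rw [aval, List.getD_eq_getElem _ 0 (by rwa [hookList_length]), hookList_get]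
      omega
    rcases le_total i j with h | h
    · rw [min_eq_left h, max_eq_right h, YoungDiagram.mem_iff_lt_rowLen]
      constructor
      · rintro ⟨hid, hmax⟩
        have hir : i < Y.rowLen i := (lt_dY_iff Y i).1 hid
        rw [hav i hid] at hmax
        omega
      · intro hj
        have hir : i < Y.rowLen i := by omega
        have hid : i < dY Y := (lt_dY_iff Y i).2 hir
        rw [hav i hid]
        exact ⟨hid, by omega⟩
    · rw [min_eq_right h, max_eq_left h, YoungDiagram.mem_iff_lt_colLen, colLen_eq_rowLen ht]
      constructor
      · rintro ⟨hjd, hmax⟩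
        have hjr : j < Y.rowLen j := (lt_dY_iff Y j).1 hjd
        rw [hav j hjd] at hmax
        omega
      · intro hi
        have hjr : j < Y.rowLen j := by omega
        have hjd : j < dY Y := (lt_dY_iff Y j).2 hjr
        rw [hav j hjd]
        exact ⟨hjd, by omega⟩
  right_inv := fun ⟨ν, hnd, hodd⟩ => by
    apply Subtype.ext
    apply Nat.Partition.ext
    show ((hookList (GD _ _ _) : Multiset ℕ)) = ν.parts
    rw [hookList_GD, Multiset.sort_eq]



def oddsum {n : ℕ} (lam : Nat.Partition n) : ℕ := (lam.parts.filter (fun x => Odd x)).sum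

lemma parts_split {n : ℕ} (lam : Nat.Partition n) :
    lam.parts.filter (fun x => Odd x) + lam.parts.filter (fun x => Even x) = lam.parts := by
  have h : lam.parts.filter (fun x => Even x) = lam.parts.filter (fun x => ¬ Odd x) := by
    apply Multiset.filter_congr
    intro x _
    rw [← Nat.not_odd_iff_even]
  rw [h, Multiset.filter_add_not]

lemma oddsum_le {n : ℕ} (lam : Nat.Partition n) : oddsum lam ≤ n := by
  have := congrArg Multiset.sum (parts_split lam)
  rw [Multiset.sum_add, lam.parts_sum] at this
  rw [oddsum]
  omega

def splitEquiv (n m : ℕ) (hm : m ≤ n) :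
    {lam : Nat.Partition n // lam.parts.Nodup ∧ oddsum lam = m} ≃
      {μ : Nat.Partition m // μ.parts.Nodup ∧ ∀ x ∈ μ.parts, Odd x} ×
      {ν : Nat.Partition (n - m) // ν.parts.Nodup ∧ ∀ x ∈ ν.parts, Even x} where
  toFun := fun ⟨lam, hnd, hsum⟩ =>
    (⟨⟨lam.parts.filter (fun x => Odd x),
        fun hi => lam.parts_pos (Multiset.mem_of_mem_filter hi), hsum⟩,
      hnd.filter _, fun x hx => (Multiset.mem_filter.1 hx).2⟩,
     ⟨⟨lam.parts.filter (fun x => Even x),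
        fun hi => lam.parts_pos (Multiset.mem_of_mem_filter hi), by
          have := congrArg Multiset.sum (parts_split lam)
          rw [Multiset.sum_add, lam.parts_sum] at this
          rw [oddsum] at hsum
          omega⟩,
      hnd.filter _, fun x hx => (Multiset.mem_filter.1 hx).2⟩)
  invFun := fun ⟨⟨μ, hμnd, hμo⟩, ⟨ν, hνnd, hνe⟩⟩ =>
    ⟨⟨μ.parts + ν.parts,
      fun hi => by
        rcases Multiset.mem_add.1 hi with h | h
        exacts [μ.parts_pos h, ν.parts_pos h],
      by rw [Multiset.sum_add, μ.parts_sum, ν.parts_sum]; omega⟩,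
     by
      rw [Multiset.nodup_add]
      refine ⟨hμnd, hνnd, ?_⟩
      rw [Multiset.disjoint_left]
      intro x hx1 hx2
      exact absurd (hνe x hx2) (Nat.not_even_iff_odd.2 (hμo x hx1)), by
      show ((μ.parts + ν.parts).filter (fun x => Odd x)).sum = m
      rw [Multiset.filter_add, Multiset.filter_eq_self.2 hμo,
        Multiset.filter_eq_nil.2 (fun x hx => Nat.not_odd_iff_even.2 (hνe x hx)),
        add_zero, μ.parts_sum]⟩
  left_inv := fun ⟨lam, hnd, hsum⟩ => by
    apply Subtype.ext
    apply Nat.Partition.ext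
    exact parts_split lam
  right_inv := fun ⟨⟨μ, hμnd, hμo⟩, ⟨ν, hνnd, hνe⟩⟩ => by
    ext : 1
    · apply Subtype.ext
      apply Nat.Partition.ext
      show (μ.parts + ν.parts).filter (fun x => Odd x) = μ.parts
      rw [Multiset.filter_add, Multiset.filter_eq_self.2 hμo,
        Multiset.filter_eq_nil.2 (fun x hx => Nat.not_odd_iff_even.2 (hνe x hx)), add_zero]
    · apply Subtype.ext
      apply Nat.Partition.ext
      show (μ.parts + ν.parts).filter (fun x => Even x) = ν.parts
      rw [Multiset.filter_add, Multiset.filter_eq_self.2 hνe,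
        Multiset.filter_eq_nil.2 (fun x hx => Nat.not_even_iff_odd.2 (hμo x hx)), zero_add]

lemma card_distinct_split (n : ℕ) :
    Fintype.card {lam : Nat.Partition n // lam.parts.Nodup} =
      ∑ m ∈ Finset.range (n + 1),
        Fintype.card {lam : Nat.Partition n // lam.parts.Nodup ∧ oddsum lam = m} := by
  rw [Fintype.card_subtype]
  rw [Finset.card_eq_sum_card_fiberwise (f := oddsum) (t := Finset.range (n + 1))
    (fun lam _ => Finset.mem_range.2 (Nat.lt_succ_of_le (oddsum_le lam)))]
  refine Finset.sum_congr rfl fun m _ => ?_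
  rw [Fintype.card_subtype, Finset.filter_filter]


/-- For all `n ≥ 1`, `h(n) = q(n)`: the number of self-half-conjugate
overpartitions in `D_2(n)` equals the number of partitions of `n` into distinct
parts. -/
theorem h_eq_q (n : ℕ) (hn : 1 ≤ n) :
    selfHalfConj n = Fintype.card {μ : Nat.Partition n // μ.parts.Nodup} := by
  rw [selfHalfConj, card_distinct_split]
  refine Finset.sum_congr rfl fun m hm => ?_
  have hm' : m ≤ n := by rw [Finset.mem_range] at hm; omega
  have h2 : Fintype.card {lam : Nat.Partition n // lam.parts.Nodup ∧ oddsum lam = m} =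
      Fintype.card {μ : Nat.Partition m // μ.parts.Nodup ∧ ∀ x ∈ μ.parts, Odd x} *
        Fintype.card {ν : Nat.Partition (n - m) // ν.parts.Nodup ∧ ∀ x ∈ ν.parts, Even x} := by
    rw [Fintype.card_congr (splitEquiv n m hm'), Fintype.card_prod]
  rw [h2]
  congr 1
  exact Fintype.card_congr ((equivSC m).trans (equivHook m))
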